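/- Let G be a graph on vertex set ℕ that contains an infinite matching (an infinite set of pairwise vertex-disjoint edges). Then there exist uncountably many permutations of ℕ such that any two distinct ones agree with G in infinitely many positions, i.e., for any two distinct permutations σ, τ in the family, {j : σ(j) and τ(j) are adjacent in G} is infinite. -/
import Mathlib

open Classical in
noncomputable def matchPerm (a b : ℕ → ℕ) (z : ℕ → Bool) (x : ℕ) : ℕ :=
  if h : ∃ n, z (Nat.unpair n).1 = true ∧ a n = x then b h.choose
  else if h : ∃ n, z (Nat.unpair n).1 = true ∧ b n = x then a h.choose
  else x

/-- If a graph on ℕ contains an infinite matching, then there are uncountably many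
permutations of ℕ, any two distinct ones of which are adjacent in infinitely many
positions. -/
theorem infinite_matching_uncountable_family (Adj : ℕ → ℕ → Prop)
    (hsymm : Symmetric Adj) (hirr : Irreflexive Adj)
    (a b : ℕ → ℕ) (hedge : ∀ n, Adj (a n) (b n))
    (hdisj : ∀ m n : ℕ, a m ≠ b n ∧ (m ≠ n → a m ≠ a n ∧ b m ≠ b n)) :
    ∃ F : (ℕ → Bool) → Equiv.Perm ℕ, Function.Injective F ∧
      ∀ z z' : ℕ → Bool, z ≠ z' →
        {j : ℕ | Adj (F z j) (F z' j)}.Infinite := by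
  classical
  have ainj : Function.Injective a := by
    intro m n h
    by_contra hne
    exact ((hdisj m n).2 hne).1 h
  have binj : Function.Injective b := by
    intro m n h
    by_contra hne
    exact ((hdisj m n).2 hne).2 h
  have hab : ∀ m n, a m ≠ b n := fun m n => (hdisj m n).1
  -- evaluation lemmas
  have fa : ∀ z n, z (Nat.unpair n).1 = true → matchPerm a b z (a n) = b n := by
    intro z n hz
    have h : ∃ m, z (Nat.unpair m).1 = true ∧ a m = a n := ⟨n, hz, rfl⟩
    rw [matchPerm, dif_pos h]
    exact congrArg b (ainj h.choose_spec.2)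
  have fa' : ∀ z n, z (Nat.unpair n).1 = false → matchPerm a b z (a n) = a n := by
    intro z n hz
    have h1 : ¬ ∃ m, z (Nat.unpair m).1 = true ∧ a m = a n := by
      rintro ⟨m, hm, he⟩
      rw [ainj he] at hm
      simp [hz] at hm
    have h2 : ¬ ∃ m, z (Nat.unpair m).1 = true ∧ b m = a n := by
      rintro ⟨m, _, he⟩
      exact hab n m he.symm
    rw [matchPerm, dif_neg h1, dif_neg h2]
  have fb : ∀ z n, z (Nat.unpair n).1 = true → matchPerm a b z (b n) = a n := by
    intro z n hz
    have h1 : ¬ ∃ m, z (Nat.unpair m).1 = true ∧ a m = b n := by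
      rintro ⟨m, _, he⟩
      exact hab m n he
    have h : ∃ m, z (Nat.unpair m).1 = true ∧ b m = b n := ⟨n, hz, rfl⟩
    rw [matchPerm, dif_neg h1, dif_pos h]
    exact congrArg a (binj h.choose_spec.2)
  have fb' : ∀ z n, z (Nat.unpair n).1 = false → matchPerm a b z (b n) = b n := by
    intro z n hz
    have h1 : ¬ ∃ m, z (Nat.unpair m).1 = true ∧ a m = b n := by
      rintro ⟨m, _, he⟩
      exact hab m n he
    have h2 : ¬ ∃ m, z (Nat.unpair m).1 = true ∧ b m = b n := by
      rintro ⟨m, hm, he⟩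
      rw [binj he] at hm
      simp [hz] at hm
    rw [matchPerm, dif_neg h1, dif_neg h2]
  have hinv : ∀ z, Function.Involutive (matchPerm a b z) := by
    intro z x
    by_cases h1 : ∃ n, z (Nat.unpair n).1 = true ∧ a n = x
    · obtain ⟨n, hz, he⟩ := h1
      subst he
      rw [fa z n hz, fb z n hz]
    · by_cases h2 : ∃ n, z (Nat.unpair n).1 = true ∧ b n = x
      · obtain ⟨n, hz, he⟩ := h2
        subst he
        rw [fb z n hz, fa z n hz]
      · have hfix : matchPerm a b z x = x := by
          rw [matchPerm, dif_neg h1, dif_neg h2]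
        rw [hfix, hfix]
  refine ⟨fun z => (hinv z).toPerm, ?_, ?_⟩
  · -- injectivity
    intro z z' h
    funext m
    by_contra hne
    set n := Nat.pair m 0 with hn
    have hun : (Nat.unpair n).1 = m := by simp [hn]
    have hval : matchPerm a b z (a n) = matchPerm a b z' (a n) := by
      have := congrArg (fun e : Equiv.Perm ℕ => e (a n)) h
      simpa [Function.Involutive.toPerm] using this
    cases hz : z m <;> cases hz' : z' m
    · exact hne (hz.trans hz'.symm)
    · rw [fa' z n (by rw [hun]; exact hz), fa z' n (by rw [hun]; exact hz')] at hval
      exact hab n n hval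
    · rw [fa z n (by rw [hun]; exact hz), fa' z' n (by rw [hun]; exact hz')] at hval
      exact hab n n hval.symm
    · exact hne (hz.trans hz'.symm)
  · -- any two distinct agree with G infinitely often
    intro z z' hne
    obtain ⟨m, hm⟩ := Function.ne_iff.mp hne
    apply Set.infinite_of_injective_forall_mem
      (f := fun k : ℕ => a (Nat.pair m k))
    · intro k k' hkk
      have := ainj hkk
      have := congrArg (fun x => (Nat.unpair x).2) this
      simpa using this
    · intro k
      set n := Nat.pair m k with hn
      have hun : (Nat.unpair n).1 = m := by simp [hn]
      show Adj (matchPerm a b z (a n)) (matchPerm a b z' (a n))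
      cases hz : z m <;> cases hz' : z' m
      · exact absurd (hz.trans hz'.symm) hm
      · rw [fa' z n (by rw [hun]; exact hz), fa z' n (by rw [hun]; exact hz')]
        exact hedge n
      · rw [fa z n (by rw [hun]; exact hz), fa' z' n (by rw [hun]; exact hz')]
        exact hsymm (hedge n)
      · exact absurd (hz.trans hz'.symm) hm
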